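/- arXiv:1306.3835 — 3 statements merged into one kernel-verified Lean document; each statement's English description precedes it below -/
import Mathlib

section
/- Let p be a polynomial with complex coefficients and let 0 ≤ k ≤ n−1. Then I_0(x^k Q_n[p](x) e^{−x³}) = (k!/3^{k+1}) Q_{n−k−1}[p](0), and I_1(x^k Q_n[p](x) e^{−x³}) = I_2(x^k Q_n[p](x) e^{−x³}) = −(k!/3^{k+1}) Q_{n−k−1}[p](0). -/
/-- The primitive third root of unity `ω = exp(2πi/3)`. -/
noncomputable def ω : ℂ := Complex.exp (2 * Real.pi * Complex.I / 3)

/-- Integral over the ray `Γ₀ = [0,∞)`. -/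
noncomputable def I0 (f : ℂ → ℂ) : ℂ := ∫ t in Set.Ioi (0 : ℝ), f t

/-- Integral over the ray `Γ₁ = ω·[0,∞)`, oriented towards the origin. -/
noncomputable def I1 (f : ℂ → ℂ) : ℂ := -ω * ∫ t in Set.Ioi (0 : ℝ), f (ω * t)

/-- Integral over the ray `Γ₂ = ω²·[0,∞)`, oriented towards the origin. -/
noncomputable def I2 (f : ℂ → ℂ) : ℂ := -ω ^ 2 * ∫ t in Set.Ioi (0 : ℝ), f (ω ^ 2 * t)

/-- `Q n p x = (−1)ⁿ 3⁻ⁿ e^{x³} (d/dx)ⁿ (e^{−x³} p(x))`. -/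
noncomputable def Q (n : ℕ) (p : Polynomial ℂ) : ℂ → ℂ := fun x =>
  (-1) ^ n / 3 ^ n * Complex.exp (x ^ 3) *
    iteratedDeriv n (fun z => Complex.exp (-z ^ 3) * p.eval z) x

open MeasureTheory Polynomial Filter Set

/-- polynomial recursion for derivatives of `e^{-x³} p(x)` -/
noncomputable def Rq : ℕ → Polynomial ℂ → Polynomial ℂ
  | 0, p => p
  | n+1, p => (Rq n p).derivative - Polynomial.C 3 * Polynomial.X ^ 2 * Rq n p

lemma hasDerivAt_aux (r : Polynomial ℂ) (x : ℂ) :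
    HasDerivAt (fun z => Complex.exp (-z ^ 3) * r.eval z)
      (Complex.exp (-x ^ 3) * (r.derivative - Polynomial.C 3 * Polynomial.X ^ 2 * r).eval x)
      x := by
  have h1 : HasDerivAt (fun z : ℂ => Complex.exp (-z ^ 3))
      (-(3 * x ^ 2) * Complex.exp (-x ^ 3)) x := by
    have : HasDerivAt (fun z : ℂ => -z ^ 3) (-(3 * x ^ 2)) x := by
      simpa using (hasDerivAt_pow 3 x).fun_neg
    simpa [mul_comm] using this.cexp
  have h2 : HasDerivAt (fun z : ℂ => r.eval z) (r.derivative.eval x) x := r.hasDerivAt x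
  have := h1.fun_mul h2
  refine this.congr_deriv ?_
  simp [Polynomial.eval_mul, Polynomial.eval_pow]
  ring

lemma iteratedDeriv_eq (p : Polynomial ℂ) (n : ℕ) (x : ℂ) :
    iteratedDeriv n (fun z => Complex.exp (-z ^ 3) * p.eval z) x
      = Complex.exp (-x ^ 3) * (Rq n p).eval x := by
  induction n generalizing x with
  | zero => simp [Rq]
  | succ n ih =>
    rw [iteratedDeriv_succ]
    have : deriv (iteratedDeriv n fun z => Complex.exp (-z ^ 3) * p.eval z) x
        = deriv (fun z => Complex.exp (-z ^ 3) * (Rq n p).eval z) x := by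
      apply Filter.EventuallyEq.deriv_eq
      exact Filter.Eventually.of_forall ih
    rw [this, (hasDerivAt_aux (Rq n p) x).deriv]
    rfl


lemma tend_real (i : ℕ) :
    Tendsto (fun t : ℝ => t ^ i * Real.exp (-t ^ 3)) atTop (nhds 0) := by
  have h : Tendsto (fun t : ℝ => (t ^ 3) ^ i * Real.exp (-t ^ 3)) atTop (nhds 0) :=
    (Real.tendsto_pow_mul_exp_neg_atTop_nhds_zero i).comp (tendsto_pow_atTop (by norm_num))
  apply squeeze_zero' (g := fun t : ℝ => (t ^ 3) ^ i * Real.exp (-t ^ 3)) _ _ h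
  · filter_upwards [eventually_ge_atTop (0:ℝ)] with t ht
    positivity
  · filter_upwards [eventually_ge_atTop (1:ℝ)] with t ht
    have : t ^ i ≤ (t ^ 3) ^ i := by
      apply pow_le_pow_left₀ (by linarith)
      exact le_self_pow₀ ht (by norm_num)
    exact mul_le_mul_of_nonneg_right this (Real.exp_nonneg _)

lemma norm_mono (i : ℕ) {t : ℝ} (ht : 0 ≤ t) :
    ‖(t : ℂ) ^ i * Complex.exp (-(t:ℂ) ^ 3)‖ = t ^ i * Real.exp (-t ^ 3) := by
  rw [norm_mul, norm_pow, Complex.norm_exp]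
  have : (-(t:ℂ) ^ 3) = ((-t ^ 3 : ℝ) : ℂ) := by push_cast; ring
  rw [this, Complex.ofReal_re]
  simp [Complex.norm_real, abs_of_nonneg ht]

lemma tend_mono (i : ℕ) :
    Tendsto (fun t : ℝ => (t : ℂ) ^ i * Complex.exp (-(t:ℂ) ^ 3)) atTop (nhds 0) := by
  apply squeeze_zero_norm' _ (tend_real i)
  filter_upwards [eventually_ge_atTop (0:ℝ)] with t ht
  exact le_of_eq (norm_mono i ht)

lemma int_mono (i : ℕ) :
    IntegrableOn (fun t : ℝ => (t : ℂ) ^ i * Complex.exp (-(t:ℂ) ^ 3)) (Ioi 0) := by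
  have hreal : IntegrableOn (fun t : ℝ => t ^ (i:ℝ) * Real.exp (-t ^ (3:ℝ))) (Ioi 0) :=
    integrableOn_rpow_mul_exp_neg_rpow (lt_of_lt_of_le (by norm_num) (Nat.cast_nonneg i)) (by norm_num)
  apply Integrable.mono' hreal
  · apply Continuous.aestronglyMeasurable
    continuity
  · filter_upwards [ae_restrict_mem measurableSet_Ioi] with t ht
    rw [norm_mono i (le_of_lt ht)]
    rw [Real.rpow_natCast, ← Real.rpow_natCast t 3]
    norm_num

-- assume tend_mono, int_mono from before

lemma decomp (j : ℕ) (q : Polynomial ℂ) (t : ℝ) :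
    (t : ℂ) ^ j * Complex.exp (-(t:ℂ) ^ 3) * q.eval (t:ℂ)
      = ∑ i ∈ Finset.range (q.natDegree + 1),
          q.coeff i * ((t : ℂ) ^ (i + j) * Complex.exp (-(t:ℂ) ^ 3)) := by
  rw [Polynomial.eval_eq_sum_range, Finset.mul_sum]
  apply Finset.sum_congr rfl
  intro i _
  rw [pow_add]
  ring

lemma tend_poly (j : ℕ) (q : Polynomial ℂ) :
    Tendsto (fun t : ℝ => (t : ℂ) ^ j * Complex.exp (-(t:ℂ) ^ 3) * q.eval (t:ℂ))
      atTop (nhds 0) := by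
  simp only [decomp j q]
  have : Tendsto (fun t : ℝ => ∑ i ∈ Finset.range (q.natDegree + 1),
      q.coeff i * ((t : ℂ) ^ (i + j) * Complex.exp (-(t:ℂ) ^ 3))) atTop
      (nhds (∑ i ∈ Finset.range (q.natDegree + 1), q.coeff i * 0)) := by
    apply tendsto_finset_sum
    intro i _
    exact (tend_mono (i + j)).const_mul _
  simpa using this

lemma int_poly (j : ℕ) (q : Polynomial ℂ) :
    IntegrableOn (fun t : ℝ => (t : ℂ) ^ j * Complex.exp (-(t:ℂ) ^ 3) * q.eval (t:ℂ))
      (Ioi 0) := by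
  simp only [decomp j q]
  apply integrable_finset_sum
  intro i _
  exact (int_mono (i + j)).const_mul _



lemma Rq_succ (n : ℕ) (p : Polynomial ℂ) :
    Rq (n+1) p = (Rq n p).derivative - Polynomial.C 3 * Polynomial.X ^ 2 * Rq n p := rfl

lemma Rq_comp (μ : ℂ) (hμ : μ ^ 3 = 1) (p : Polynomial ℂ) : ∀ n : ℕ,
    Rq n (p.comp (Polynomial.C μ * Polynomial.X))
      = Polynomial.C (μ ^ n) * (Rq n p).comp (Polynomial.C μ * Polynomial.X) := by
  intro n
  induction n with
  | zero => simp [Rq]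
  | succ n ih =>
    have hC : (Polynomial.C μ : Polynomial ℂ) ^ 3 = 1 := by
      rw [← Polynomial.C_pow, hμ, Polynomial.C_1]
    have h3 : (Polynomial.C (3:ℂ)) = 3 := map_ofNat Polynomial.C 3
    rw [Rq_succ, Rq_succ, ih]
    simp only [h3, Polynomial.ofNat_comp, Polynomial.derivative_pow, Polynomial.sub_comp, Polynomial.mul_comp, Polynomial.pow_comp,
      Polynomial.C_comp, Polynomial.X_comp, Polynomial.derivative_mul,
      Polynomial.derivative_C, Polynomial.derivative_comp, Polynomial.derivative_X,
      Polynomial.C_pow, Polynomial.C_mul]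
    linear_combination (3 * (Polynomial.C μ) ^ n * Polynomial.X ^ 2 *
      (Rq n p).comp (Polynomial.C μ * Polynomial.X)) * hC




lemma hasDerivAt_aux' (r : Polynomial ℂ) (t : ℝ) :
    HasDerivAt (fun s : ℝ => Complex.exp (-(s:ℂ) ^ 3) * r.eval (s:ℂ))
      (Complex.exp (-(t:ℂ) ^ 3) * (Rq 1 r).eval (t:ℂ)) t :=
  (hasDerivAt_aux r t).comp_ofReal

lemma core (k : ℕ) : ∀ n : ℕ, k < n → ∀ q : Polynomial ℂ,
    (∫ t in Ioi (0:ℝ), (t:ℂ) ^ k * Complex.exp (-(t:ℂ) ^ 3) * (Rq n q).eval (t:ℂ))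
      = (-1) ^ (k+1) * (Nat.factorial k : ℂ) * (Rq (n - k - 1) q).eval 0 := by
  induction k with
  | zero =>
    rintro (_ | m) hn q
    · omega
    have key := integral_Ioi_of_hasDerivAt_of_tendsto'
      (f := fun t : ℝ => Complex.exp (-(t:ℂ) ^ 3) * (Rq m q).eval (t:ℂ))
      (f' := fun t : ℝ => Complex.exp (-(t:ℂ) ^ 3) * (Rq (m+1) q).eval (t:ℂ))
      (fun t _ => by
        have := hasDerivAt_aux' (Rq m q) t
        simpa [Rq] using this)
      (by simpa using int_poly 0 (Rq (m+1) q))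
      (by simpa using tend_poly 0 (Rq m q))
    simp only [pow_zero, one_mul]
    rw [key]
    simp [Nat.factorial]
  | succ k ih =>
    rintro (_ | m) hn q
    · omega
    have hk : k < m := by omega
    -- F t = t^(k+1) * (exp(-t³) * (Rq m q)(t)), F' = (k+1) t^k G + t^(k+1) G'
    set G : ℝ → ℂ := fun t => Complex.exp (-(t:ℂ) ^ 3) * (Rq m q).eval (t:ℂ) with hG
    set G' : ℝ → ℂ := fun t => Complex.exp (-(t:ℂ) ^ 3) * (Rq (m+1) q).eval (t:ℂ) with hG'
    have hF : ∀ t : ℝ, HasDerivAt (fun s : ℝ => (s:ℂ) ^ (k+1) * G s)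
        (((k:ℂ)+1) * (t:ℂ) ^ k * G t + (t:ℂ) ^ (k+1) * G' t) t := by
      intro t
      have hp : HasDerivAt (fun s : ℝ => (s:ℂ) ^ (k+1)) (((k:ℂ)+1) * (t:ℂ) ^ k) t := by
        have := (hasDerivAt_pow (k+1) (t:ℂ)).comp_ofReal
        simpa using this
      have hg : HasDerivAt G (G' t) t := by
        have := hasDerivAt_aux' (Rq m q) t
        simpa [Rq, hG, hG'] using this
      simpa using hp.fun_mul hg
    have key := integral_Ioi_of_hasDerivAt_of_tendsto'
      (f := fun s : ℝ => (s:ℂ) ^ (k+1) * G s)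
      (f' := fun t : ℝ => ((k:ℂ)+1) * (t:ℂ) ^ k * G t + (t:ℂ) ^ (k+1) * G' t)
      (fun t _ => hF t)
      (by
        apply Integrable.add
        · have := (int_poly k (Rq m q)).const_mul ((k:ℂ)+1)
          apply this.congr
          filter_upwards with t
          simp [hG]; ring
        · have := int_poly (k+1) (Rq (m+1) q)
          apply this.congr
          filter_upwards with t
          simp [hG']; ring)
      (by
        have := tend_poly (k+1) (Rq m q)
        apply this.congr
        intro t; simp [hG]; ring)
    replace key : (∫ t in Ioi (0:ℝ), (((k:ℂ)+1) * (t:ℂ) ^ k * G t + (t:ℂ) ^ (k+1) * G' t)) = 0 := by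
      simpa using key
    have hsplit : (∫ t in Ioi (0:ℝ), (((k:ℂ)+1) * (t:ℂ) ^ k * G t + (t:ℂ) ^ (k+1) * G' t))
        = ((k:ℂ)+1) * (∫ t in Ioi (0:ℝ), (t:ℂ) ^ k * G t)
          + ∫ t in Ioi (0:ℝ), (t:ℂ) ^ (k+1) * G' t := by
      rw [integral_add, ← MeasureTheory.integral_const_mul]
      · congr 1
        apply setIntegral_congr_fun measurableSet_Ioi
        intro t _; ring
      · have := (int_poly k (Rq m q)).const_mul ((k:ℂ)+1)
        apply this.congr
        filter_upwards with t
        simp [hG]; ring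
      · have := int_poly (k+1) (Rq (m+1) q)
        apply this.congr
        filter_upwards with t
        simp [hG']; ring
    rw [hsplit] at key
    have ihm : (∫ t in Ioi (0:ℝ), (t:ℂ) ^ k * G t)
        = (-1) ^ (k+1) * (Nat.factorial k : ℂ) * (Rq (m - k - 1) q).eval 0 := by
      have := ih m hk q
      rw [← this]
      apply setIntegral_congr_fun measurableSet_Ioi
      intro t _; simp [hG]; ring
    have target : (∫ t in Ioi (0:ℝ), (t:ℂ) ^ (k+1) * Complex.exp (-(t:ℂ) ^ 3) * (Rq (m+1) q).eval (t:ℂ))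
        = ∫ t in Ioi (0:ℝ), (t:ℂ) ^ (k+1) * G' t := by
      apply setIntegral_congr_fun measurableSet_Ioi
      intro t _; simp [hG']; ring
    rw [target]
    have : (∫ t in Ioi (0:ℝ), (t:ℂ) ^ (k+1) * G' t)
        = -(((k:ℂ)+1) * ((-1) ^ (k+1) * (Nat.factorial k : ℂ) * (Rq (m - k - 1) q).eval 0)) := by
      rw [← ihm]; linear_combination key
    rw [this]
    have hsub : m + 1 - (k+1) - 1 = m - k - 1 := by omega
    rw [hsub]
    push_cast [Nat.factorial_succ]
    ring





lemma Q_eq (n : ℕ) (p : Polynomial ℂ) (x : ℂ) :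
    Q n p x = (-1) ^ n / 3 ^ n * (Rq n p).eval x := by
  unfold Q
  rw [iteratedDeriv_eq, mul_assoc, ← mul_assoc (Complex.exp _), ← Complex.exp_add]
  simp

lemma main (μ : ℂ) (hμ3 : μ ^ 3 = 1) (p : Polynomial ℂ) (n k : ℕ) (hk : k < n) :
    (∫ t in Ioi (0:ℝ), ((μ * (t:ℂ)) ^ k * Q n p (μ * t) * Complex.exp (-(μ * (t:ℂ)) ^ 3)))
      = μ ^ 2 * ((Nat.factorial k : ℂ) / 3 ^ (k + 1) * Q (n - k - 1) p 0) := by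
  have hμ0 : μ ≠ 0 := by
    intro h; rw [h] at hμ3; norm_num at hμ3
  obtain ⟨m, rfl⟩ : ∃ m, n = m + k + 1 := ⟨n - k - 1, by omega⟩
  have hm : m + k + 1 - k - 1 = m := by omega
  set pμ := p.comp (Polynomial.C μ * Polynomial.X) with hpμ
  have heval : ∀ z : ℂ, (Rq (m+k+1) pμ).eval z = μ ^ (m+k+1) * (Rq (m+k+1) p).eval (μ * z) := by
    intro z
    rw [Rq_comp μ hμ3 p]
    simp [Polynomial.eval_comp]
  have heval0 : (Rq m pμ).eval 0 = μ ^ m * (Rq m p).eval 0 := by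
    rw [Rq_comp μ hμ3 p]
    simp [Polynomial.eval_comp]
  have hintg : ∀ t : ℝ,
      (μ * (t:ℂ)) ^ k * Q (m+k+1) p (μ * t) * Complex.exp (-(μ * (t:ℂ)) ^ 3)
      = (μ ^ k * ((-1) ^ (m+k+1) / 3 ^ (m+k+1)) / μ ^ (m+k+1)) *
          ((t:ℂ) ^ k * Complex.exp (-(t:ℂ) ^ 3) * (Rq (m+k+1) pμ).eval (t:ℂ)) := by
    intro t
    rw [Q_eq, heval]
    have hcube : (-(μ * (t:ℂ)) ^ 3) = -(t:ℂ) ^ 3 := by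
      rw [mul_pow, hμ3, one_mul]
    rw [hcube]
    field_simp
    ring
  calc (∫ t in Ioi (0:ℝ), ((μ * (t:ℂ)) ^ k * Q (m+k+1) p (μ * t) * Complex.exp (-(μ * (t:ℂ)) ^ 3)))
      = (μ ^ k * ((-1) ^ (m+k+1) / 3 ^ (m+k+1)) / μ ^ (m+k+1)) *
        ∫ t in Ioi (0:ℝ), ((t:ℂ) ^ k * Complex.exp (-(t:ℂ) ^ 3) * (Rq (m+k+1) pμ).eval (t:ℂ)) := by
        rw [← MeasureTheory.integral_const_mul]
        exact setIntegral_congr_fun measurableSet_Ioi (fun t _ => hintg t)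
    _ = (μ ^ k * ((-1) ^ (m+k+1) / 3 ^ (m+k+1)) / μ ^ (m+k+1)) *
        ((-1) ^ (k+1) * (Nat.factorial k : ℂ) * (μ ^ m * (Rq m p).eval 0)) := by
        rw [core k (m+k+1) (by omega) pμ, hm, heval0]
    _ = μ ^ 2 * ((Nat.factorial k : ℂ) / 3 ^ (k + 1) * Q (m + k + 1 - k - 1) p 0) := by
        rw [hm, Q_eq]
        have h2 : μ ^ 2 * μ = 1 := by rw [← pow_succ]; exact hμ3
        field_simp
        rw [show (μ ^ (m+k+1) : ℂ) = μ ^ m * μ ^ k * μ by rw [← pow_add, ← pow_succ]]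
        rw [show ((-1:ℂ) ^ (m+k+1) : ℂ) = (-1) ^ m * (-1) ^ k * (-1) by rw [← pow_add, ← pow_succ]]
        rw [show ((3:ℂ) ^ (m+k+1) : ℂ) = 3 ^ m * 3 ^ k * 3 by rw [← pow_add, ← pow_succ]]
        rw [pow_succ (-1:ℂ) k]
        have hsq : ((-1:ℂ) ^ k) ^ 2 = 1 := by
          rw [← pow_mul, mul_comm, pow_mul]; norm_num
        linear_combination (μ ^ k * μ ^ m * (Polynomial.eval 0 (Rq m p)) * (Nat.factorial k : ℂ)
            * 3 ^ m * 3 ^ k * 3 * (-1) ^ m) * hsq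
          - (μ ^ k * μ ^ m * (Polynomial.eval 0 (Rq m p)) * (Nat.factorial k : ℂ)
            * 3 ^ m * 3 ^ k * 3 * (-1) ^ m) * hμ3


/-- For `0 ≤ k ≤ n−1`,
`I₀(xᵏ Qₙ[p](x) e^{−x³}) = (k!/3^{k+1}) Q_{n−k−1}[p](0)` and
`I₁(xᵏ Qₙ[p](x) e^{−x³}) = I₂(xᵏ Qₙ[p](x) e^{−x³}) = −(k!/3^{k+1}) Q_{n−k−1}[p](0)`. -/
theorem stmt3 (p : Polynomial ℂ) (n k : ℕ) (hk : k < n) :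
    I0 (fun x => x ^ k * Q n p x * Complex.exp (-x ^ 3)) =
      (Nat.factorial k : ℂ) / 3 ^ (k + 1) * Q (n - k - 1) p 0 ∧
    I1 (fun x => x ^ k * Q n p x * Complex.exp (-x ^ 3)) =
      -((Nat.factorial k : ℂ) / 3 ^ (k + 1) * Q (n - k - 1) p 0) ∧
    I2 (fun x => x ^ k * Q n p x * Complex.exp (-x ^ 3)) =
      -((Nat.factorial k : ℂ) / 3 ^ (k + 1) * Q (n - k - 1) p 0) := by
  have hω3 : ω ^ 3 = 1 := by
    unfold ω
    rw [← Complex.exp_nat_mul]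
    rw [show ((3:ℕ):ℂ) * (2 * Real.pi * Complex.I / 3) = 2 * Real.pi * Complex.I by push_cast; ring]
    exact Complex.exp_two_pi_mul_I
  set V : ℂ := (Nat.factorial k : ℂ) / 3 ^ (k + 1) * Q (n - k - 1) p 0 with hV
  refine ⟨?_, ?_, ?_⟩
  · unfold I0
    simpa using main 1 (by norm_num) p n k hk
  · unfold I1
    rw [show (∫ t in Set.Ioi (0:ℝ), (fun x => x ^ k * Q n p x * Complex.exp (-x ^ 3)) (ω * t)) = ω ^ 2 * V from main ω hω3 p n k hk]
    linear_combination (-V) * hω3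
  · unfold I2
    have h6 : (ω ^ 2) ^ 3 = 1 := by
      rw [← pow_mul, mul_comm, pow_mul, hω3, one_pow]
    rw [show (∫ t in Set.Ioi (0:ℝ), (fun x => x ^ k * Q n p x * Complex.exp (-x ^ 3)) (ω ^ 2 * t)) = (ω ^ 2) ^ 2 * V from main (ω ^ 2) h6 p n k hk]
    linear_combination (-(ω ^ 3 + 1) * V) * hω3
end

section
/- For every n ∈ ℕ, every complex zero z of the diagonal polynomial P_n satisfies z³ ∈ ℝ and z³ ≥ 0; that is, all zeros of P_n lie on the union of the three closed rays [0,∞) ∪ ω·[0,∞) ∪ ω²·[0,∞), where ω = exp(2πi/3). -/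
/-- The diagonal multiple orthogonal polynomial
`P n x = (−1)ⁿ 3⁻ⁿ e^{x³} (d/dx)ⁿ e^{−x³}` (that is, `P_{n,n}` for the
exponential cubic weight). -/
noncomputable def P (n : ℕ) : ℂ → ℂ := fun x =>
  (-1) ^ n / 3 ^ n * Complex.exp (x ^ 3) *
    iteratedDeriv n (fun z => Complex.exp (-z ^ 3)) x

open Polynomial Finset


/-! ### Parity and sign helpers -/

lemma sign_prod {α : Type*} [DecidableEq α] (t : Finset α) (f : α → ℝ)
    (h : ∀ j ∈ t, f j ≠ 0) :
    0 < (-1 : ℝ) ^ (t.filter (fun j => f j < 0)).card * ∏ j ∈ t, f j := by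
  induction t using Finset.induction_on with
  | empty => simp
  | @insert a t hat ih =>
    have hfa : f a ≠ 0 := h a (mem_insert_self a t)
    have ih' := ih (fun j hj => h j (mem_insert_of_mem hj))
    rw [Finset.prod_insert hat, Finset.filter_insert]
    rcases lt_or_gt_of_ne hfa with hneg | hpos
    · rw [if_pos hneg, Finset.card_insert_of_notMem (fun hc => hat (mem_filter.1 hc).1)]
      rw [pow_succ]
      nlinarith
    · rw [if_neg (not_lt.2 hpos.le)]
      nlinarith

/-! ### Roots from alternating signs -/

lemma alternating_roots (g : Polynomial ℝ) (d : ℕ) (s : Fin (d + 1) → ℝ)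
    (hs : StrictMono s)
    (hsign : ∀ k : Fin (d + 1), 0 < (-1 : ℝ) ^ (d - (k : ℕ)) * g.eval (s k)) :
    ∃ ρ : Fin d → ℝ, StrictMono ρ ∧
      (∀ k : Fin d, s k.castSucc < ρ k ∧ ρ k < s k.succ) ∧
      ∀ k, g.eval (ρ k) = 0 := by
  have H : ∀ k : Fin d, ∃ c, c ∈ Set.Ioo (s k.castSucc) (s k.succ) ∧ g.eval c = 0 := by
    intro k
    have e1 := hsign k.castSucc
    have e2 := hsign k.succ
    have hc1 : ((k.castSucc : Fin (d+1)) : ℕ) = (k : ℕ) := rfl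
    have hc2 : ((k.succ : Fin (d+1)) : ℕ) = (k : ℕ) + 1 := rfl
    rw [hc1] at e1
    rw [hc2] at e2
    have hkd : (k : ℕ) + 1 ≤ d := k.is_lt
    have hexp : d - (k : ℕ) = (d - ((k : ℕ) + 1)) + 1 := by omega
    rw [hexp, pow_succ] at e1
    have hle : s k.castSucc ≤ s k.succ := (hs (Fin.castSucc_lt_succ (i := k))).le
    rcases Nat.even_or_odd (d - ((k : ℕ) + 1)) with he | ho
    · rw [he.neg_one_pow] at e1 e2
      have h1 : g.eval (s k.castSucc) < 0 := by nlinarith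
      have h2 : 0 < g.eval (s k.succ) := by nlinarith
      obtain ⟨c, hc, hgc⟩ := intermediate_value_Ioo hle (g.continuous.continuousOn)
        (Set.mem_Ioo.2 ⟨h1, h2⟩)
      exact ⟨c, hc, hgc⟩
    · rw [ho.neg_one_pow] at e1 e2
      have h1 : 0 < g.eval (s k.castSucc) := by nlinarith
      have h2 : g.eval (s k.succ) < 0 := by nlinarith
      obtain ⟨c, hc, hgc⟩ := intermediate_value_Ioo' hle (g.continuous.continuousOn)
        (Set.mem_Ioo.2 ⟨h2, h1⟩)
      exact ⟨c, hc, hgc⟩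
  choose ρ hmem hroot using H
  refine ⟨ρ, ?_, fun k => ⟨(hmem k).1, (hmem k).2⟩, hroot⟩
  intro k k' hk
  have h1 : ρ k < s k.succ := (hmem k).2
  have h2 : s k'.castSucc ≤ ρ k' := le_of_lt (hmem k').1
  have h3 : s k.succ ≤ s k'.castSucc := by
    apply hs.monotone
    rw [Fin.le_def]
    simpa using hk
  linarith

/-! ### Facts about products of linear factors -/

noncomputable def Rpoly {m : ℕ} (r : Fin m → ℝ) : Polynomial ℝ := ∏ i, (X - C (r i))

section Rfacts
variable {m : ℕ} (r : Fin m → ℝ)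

lemma Rpoly_monic : (Rpoly r).Monic :=
  monic_prod_of_monic _ _ fun i _ => monic_X_sub_C (r i)

lemma Rpoly_natDegree : (Rpoly r).natDegree = m := by
  rw [Rpoly, natDegree_prod]
  · simp
  · intro i _; exact X_sub_C_ne_zero (r i)

lemma Rpoly_eval (x : ℝ) : (Rpoly r).eval x = ∏ i, (x - r i) := by
  simp [Rpoly, eval_prod]

lemma Rpoly_eval_root (i : Fin m) : (Rpoly r).eval (r i) = 0 := by
  rw [Rpoly_eval]
  exact Finset.prod_eq_zero (mem_univ i) (by ring)

lemma Rpoly_deriv_eval (i : Fin m) :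
    (derivative (Rpoly r)).eval (r i) = ∏ j ∈ univ.erase i, (r i - r j) := by
  have hsplit : Rpoly r = (X - C (r i)) * ∏ j ∈ univ.erase i, (X - C (r j)) :=
    (Finset.mul_prod_erase univ _ (mem_univ i)).symm
  rw [hsplit, derivative_mul]
  simp [eval_prod]

lemma Rpoly_deriv_sign (hr : StrictMono r) (i : Fin m) :
    0 < (-1 : ℝ) ^ (m - 1 - (i : ℕ)) * (derivative (Rpoly r)).eval (r i) := by
  rw [Rpoly_deriv_eval]
  have hne : ∀ j ∈ univ.erase i, r i - r j ≠ 0 := by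
    intro j hj
    have hji : j ≠ i := (Finset.mem_erase.1 hj).1
    have hne2 : r j ≠ r i := fun hc => hji (hr.injective hc)
    intro hc
    exact hne2 (by linarith [sub_eq_zero.1 hc])
  have key := sign_prod (univ.erase i) (fun j => r i - r j) hne
  have hfilter : ((univ.erase i).filter (fun j => r i - r j < 0)) = Finset.Ioi i := by
    ext j
    simp only [Finset.mem_filter, Finset.mem_erase, Finset.mem_univ, true_and,
      Finset.mem_Ioi, sub_neg, and_true]
    constructor
    · rintro ⟨hne', hlt⟩; exact hr.lt_iff_lt.1 hlt
    · intro hij; exact ⟨Fin.ne_of_gt hij, hr hij⟩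
  rw [hfilter, Fin.card_Ioi] at key
  exact key

lemma Rpoly_eval_zero_sign (h0 : ∀ i, 0 < r i) :
    0 < (-1 : ℝ) ^ m * (Rpoly r).eval 0 := by
  rw [Rpoly_eval]
  have hne : ∀ j ∈ (univ : Finset (Fin m)), (0 : ℝ) - r j ≠ 0 := by
    intro j _; have := h0 j; intro hc; linarith [sub_eq_zero.1 hc]
  have key := sign_prod univ (fun j => (0 : ℝ) - r j) hne
  have hfilter : ((univ : Finset (Fin m)).filter (fun j => (0:ℝ) - r j < 0)) = univ := by
    apply Finset.filter_true_of_mem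
    intro j _; have := h0 j; linarith
  rw [hfilter, Finset.card_univ, Fintype.card_fin] at key
  exact key

end Rfacts

lemma monic_eq_prod_of_roots {p : Polynomial ℝ} (hp : p.Monic) {d : ℕ}
    (hd : p.natDegree = d) (ρ : Fin d → ℝ) (hinj : Function.Injective ρ)
    (hroots : ∀ k, p.eval (ρ k) = 0) : p = Rpoly ρ := by
  classical
  have hp0 : p ≠ 0 := hp.ne_zero
  set S : Finset ℝ := Finset.image ρ Finset.univ with hS
  have hScard : S.card = d := by
    rw [hS, Finset.card_image_of_injective _ hinj, Finset.card_univ, Fintype.card_fin]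
  have hle : S.val ≤ p.roots := by
    refine Multiset.le_iff_count.2 fun a => ?_
    by_cases ha : a ∈ S
    · have h1 : S.val.count a = 1 := Multiset.count_eq_one_of_mem S.nodup ha
      rw [h1, Nat.one_le_iff_ne_zero, Ne, Multiset.count_eq_zero, not_not]
      obtain ⟨k, -, hk⟩ := Finset.mem_image.1 ha
      exact (Polynomial.mem_roots hp0).2 (hk ▸ hroots k)
    · rw [Multiset.count_eq_zero_of_notMem (by simpa using ha)]
      exact Nat.zero_le _
  have hcard : Multiset.card p.roots = d := by
    refine le_antisymm (hd ▸ p.card_roots') ?_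
    calc d = Multiset.card S.val := by rw [Finset.card_def] at hScard; omega
    _ ≤ Multiset.card p.roots := Multiset.card_le_card hle
  have hroots_eq : S.val = p.roots := by
    apply Multiset.eq_of_le_of_card_le hle
    rw [hcard]
    rw [Finset.card_def] at hScard; omega
  have hsplits : Splits p := splits_iff_card_roots.2 (by rw [hcard, hd])
  rw [hsplits.eq_prod_roots_of_monic hp, ← hroots_eq, Rpoly]
  rw [← Finset.prod_eq_multiset_prod]
  rw [hS, Finset.prod_image (fun a _ b _ h => hinj h)]

/-! ### The engine -/

lemma engine_core (g : Polynomial ℝ) (d : ℕ) (hg : g.Monic) (hdeg : g.natDegree = d)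
    (s : Fin (d + 1) → ℝ) (hs : StrictMono s) (hs0 : 0 ≤ s 0)
    (hsign : ∀ k : Fin (d + 1), 0 < (-1 : ℝ) ^ (d - (k : ℕ)) * g.eval (s k)) :
    ∃ ρ : Fin d → ℝ, StrictMono ρ ∧ (∀ i, 0 < ρ i) ∧ g = Rpoly ρ := by
  obtain ⟨ρ, hmono, hmem, hroot⟩ := alternating_roots g d s hs hsign
  refine ⟨ρ, hmono, ?_, ?_⟩
  · intro i
    have h1 : s 0 ≤ s i.castSucc := hs.monotone (Fin.zero_le _)
    have := (hmem i).1
    linarith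
  · exact monic_eq_prod_of_roots hg hdeg ρ hmono.injective hroot

lemma exists_big (g : Polynomial ℝ) (hg : g.Monic) (hdeg : 0 < g.natDegree) (c : ℝ) :
    ∃ b, c < b ∧ 0 < g.eval b := by
  have htend := Polynomial.tendsto_atTop_of_leadingCoeff_nonneg g
    (by rw [degree_eq_natDegree hg.ne_zero]; exact_mod_cast hdeg)
    (by rw [hg.leadingCoeff]; norm_num)
  obtain ⟨b, hb1, hb2⟩ := ((htend.eventually_gt_atTop 0).and (Filter.eventually_gt_atTop c)).exists
  exact ⟨b, hb2, hb1⟩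

lemma strictMono_snoc {n : ℕ} (f : Fin n → ℝ) (b : ℝ) (hf : StrictMono f)
    (hb : ∀ i, f i < b) : StrictMono (Fin.snoc f b : Fin (n + 1) → ℝ) := by
  rw [Fin.strictMono_iff_lt_succ]
  intro i
  rw [Fin.snoc_castSucc]
  rcases Fin.eq_castSucc_or_eq_last i.succ with ⟨j, hj⟩ | hl
  · rw [hj, Fin.snoc_castSucc]
    apply hf
    have : (i : ℕ) + 1 = (j : ℕ) := by
      have := congrArg (Fin.val) hj; simpa using this
    rw [Fin.lt_def]; omega
  · rw [hl, Fin.snoc_last]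
    exact hb i

lemma engine_zero (m : ℕ) (r : Fin m → ℝ) (hr : StrictMono r) (h0 : ∀ i, 0 < r i) :
    ∃ ρ : Fin m → ℝ, StrictMono ρ ∧ (∀ i, 0 < ρ i) ∧
      Rpoly r - derivative (Rpoly r) = Rpoly ρ := by
  set R := Rpoly r with hR
  have hRmonic : R.Monic := Rpoly_monic r
  have hR0 : R ≠ 0 := hRmonic.ne_zero
  set g := R - derivative R with hg
  have hgmonic : g.Monic := by
    rw [hg, sub_eq_add_neg]
    exact hRmonic.add_of_left (by rw [degree_neg]; exact degree_derivative_lt hR0)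
  have hgdegeq : g.degree = R.degree := by
    rw [hg]
    exact degree_sub_eq_left_of_degree_lt (degree_derivative_lt hR0)
  have hgdeg : g.natDegree = m := by
    rw [natDegree_eq_of_degree_eq hgdegeq, Rpoly_natDegree]
  rcases Nat.eq_zero_or_pos m with rfl | hm
  · refine ⟨r, hr, h0, ?_⟩
    have : R = 1 := by rw [hR, Rpoly]; simp
    rw [hg, this]
    simp [Rpoly]
  · obtain ⟨b, hbgt, hbpos⟩ := exists_big g hgmonic (by omega) (r ⟨m - 1, by omega⟩)
    have hrb : ∀ i, r i < b := by
      intro i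
      have : r i ≤ r ⟨m - 1, by omega⟩ := hr.monotone (by rw [Fin.le_def]; simp; omega)
      linarith
    obtain ⟨m', rfl⟩ : ∃ m', m = m' + 1 := ⟨m - 1, by omega⟩
    set s : Fin (m' + 2) → ℝ := Fin.snoc r b with hs_def
    have hs : StrictMono s := strictMono_snoc r b hr hrb
    have hs0 : 0 ≤ s 0 := by
      have h00 : s 0 = r 0 := by
        rw [hs_def]
        rw [show (0 : Fin (m' + 2)) = (0 : Fin (m' + 1)).castSucc from rfl,
          Fin.snoc_castSucc]
      rw [h00]
      exact (h0 0).le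
    have hsign : ∀ k : Fin (m' + 2),
        0 < (-1 : ℝ) ^ ((m' + 1) - (k : ℕ)) * g.eval (s k) := by
      intro k
      induction k using Fin.lastCases with
      | last =>
        rw [hs_def]
        simp only [Fin.snoc_last, Fin.val_last]
        simpa using hbpos
      | cast j =>
        rw [hs_def]
        rw [Fin.snoc_castSucc]
        have hj : ((j.castSucc : Fin (m' + 2)) : ℕ) = (j : ℕ) := rfl
        rw [hj]
        have heval : g.eval (r j) = -(derivative R).eval (r j) := by
          rw [hg, eval_sub, hR, Rpoly_eval_root]
          ring
        rw [heval]
        have key := Rpoly_deriv_sign r hr j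
        have hexp : (m' + 1) - (j : ℕ) = ((m' + 1) - 1 - (j : ℕ)) + 1 := by
          have := j.is_lt; omega
        rw [hexp, pow_succ]
        rw [← hR] at key
        nlinarith
    obtain ⟨ρ, h1, h2, h3⟩ := engine_core g (m' + 1) hgmonic hgdeg s hs hs0 hsign
    exact ⟨ρ, h1, h2, h3 ▸ rfl⟩

lemma engine_pos (m : ℕ) (r : Fin m → ℝ) (hr : StrictMono r) (h0 : ∀ i, 0 < r i)
    (a : ℝ) (ha : 0 < a) :
    ∃ ρ : Fin (m + 1) → ℝ, StrictMono ρ ∧ (∀ i, 0 < ρ i) ∧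
      (X - C a) * Rpoly r - X * derivative (Rpoly r) = Rpoly ρ := by
  set R := Rpoly r with hR
  have hRmonic : R.Monic := Rpoly_monic r
  have hR0 : R ≠ 0 := hRmonic.ne_zero
  have hRdegree : R.degree = (m : ℕ) := by
    rw [degree_eq_natDegree hR0, hR, Rpoly_natDegree]
  set g := (X - C a) * R - X * derivative R with hg
  have hlead : ((X - C a) * R).Monic := (monic_X_sub_C a).mul hRmonic
  have hleaddeg : ((X - C a) * R).degree = ((m + 1 : ℕ) : WithBot ℕ) := by
    rw [degree_mul, degree_X_sub_C, hRdegree]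
    rw [← Nat.cast_one, ← Nat.cast_add]
    norm_num [add_comm]
  have hsmall : (X * derivative R).degree < ((X - C a) * R).degree := by
    rw [hleaddeg, degree_mul, degree_X]
    have h1 : (derivative R).degree < (m : ℕ) := hRdegree ▸ degree_derivative_lt hR0
    calc 1 + (derivative R).degree < 1 + (m : ℕ) := by
          apply WithBot.add_lt_add_left (by norm_num) h1
    _ = ((m + 1 : ℕ) : WithBot ℕ) := by push_cast; ring
  have hgmonic : g.Monic := by
    rw [hg, sub_eq_add_neg]
    exact hlead.add_of_left (by rw [degree_neg]; exact hsmall)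
  have hgdeg : g.natDegree = m + 1 := by
    have : g.degree = ((m + 1 : ℕ) : WithBot ℕ) := by
      rw [hg, degree_sub_eq_left_of_degree_lt hsmall, hleaddeg]
    exact natDegree_eq_of_degree_eq_some this
  -- the node chain
  set f : Fin (m + 1) → ℝ := Fin.cons 0 r with hf_def
  have hfkey : ∀ (j : Fin m) (q : Fin (m + 1)), q = j.castSucc → f q < r j := by
    intro j q hq
    induction q using Fin.cases with
    | zero => rw [hf_def, Fin.cons_zero]; exact h0 j
    | succ i =>
      rw [hf_def, Fin.cons_succ]
      apply hr
      have hv : (i : ℕ) + 1 = (j : ℕ) := by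
        have := congrArg Fin.val hq; simpa using this
      rw [Fin.lt_def]; omega
  have hfmono : StrictMono f := by
    rw [Fin.strictMono_iff_lt_succ]
    intro j
    rw [hf_def, Fin.cons_succ, ← hf_def]
    exact hfkey j j.castSucc rfl
  obtain ⟨b, hbgt, hbpos⟩ := exists_big g hgmonic (by omega) (f (Fin.last m))
  have hfb : ∀ i, f i < b := fun i =>
    lt_of_le_of_lt (hfmono.monotone (Fin.le_last i)) hbgt
  set s : Fin (m + 2) → ℝ := Fin.snoc f b with hs_def
  have hs : StrictMono s := strictMono_snoc f b hfmono hfb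
  have hs0 : 0 ≤ s 0 := by
    have h00 : s 0 = f 0 := by
      rw [hs_def]
      rw [show (0 : Fin (m + 2)) = (0 : Fin (m + 1)).castSucc from rfl,
        Fin.snoc_castSucc]
    rw [h00, hf_def, Fin.cons_zero]
  have hsign : ∀ k : Fin (m + 2),
      0 < (-1 : ℝ) ^ ((m + 1) - (k : ℕ)) * g.eval (s k) := by
    intro k
    induction k using Fin.lastCases with
    | last =>
      rw [hs_def]
      simp only [Fin.snoc_last, Fin.val_last]
      simpa using hbpos
    | cast q =>
      rw [hs_def, Fin.snoc_castSucc]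
      have hq : ((q.castSucc : Fin (m + 2)) : ℕ) = (q : ℕ) := rfl
      rw [hq]
      induction q using Fin.cases with
      | zero =>
        rw [hf_def, Fin.cons_zero]
        have heval : g.eval 0 = -a * R.eval 0 := by
          rw [hg]
          simp
        rw [heval]
        have key := Rpoly_eval_zero_sign r h0
        rw [← hR] at key
        have : ((0 : Fin (m+1)) : ℕ) = 0 := rfl
        rw [this, Nat.sub_zero, pow_succ]
        nlinarith
      | succ j =>
        rw [hf_def, Fin.cons_succ]
        have heval : g.eval (r j) = -(r j) * (derivative R).eval (r j) := by
          rw [hg, eval_sub, eval_mul, eval_mul, eval_sub, eval_X, eval_C,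
            hR, Rpoly_eval_root]
          ring
        rw [heval]
        have key := Rpoly_deriv_sign r hr j
        rw [← hR] at key
        have hjv : ((j.succ : Fin (m+1)) : ℕ) = (j : ℕ) + 1 := rfl
        rw [hjv]
        have hexp : (m + 1) - ((j : ℕ) + 1) = (m - 1 - (j : ℕ)) + 1 := by
          have := j.is_lt; omega
        rw [hexp, pow_succ]
        have := h0 j
        nlinarith
  obtain ⟨ρ, h1, h2, h3⟩ := engine_core g (m + 1) hgmonic hgdeg s hs hs0 hsign
  exact ⟨ρ, h1, h2, h3 ▸ rfl⟩

/-! ### The recursion and the invariant -/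

noncomputable def Qc : ℕ → Polynomial ℂ
  | 0 => 1
  | n + 1 => derivative (Qc n) - 3 * X ^ 2 * Qc n

noncomputable def Apoly : ℕ → Polynomial ℝ
  | 0 => 1
  | n + 1 => 3 * X ^ 2 * Apoly n - derivative (Apoly n)

lemma Qc_eq_Apoly (n : ℕ) : Qc n = (-1) ^ n * (Apoly n).map (algebraMap ℝ ℂ) := by
  induction n with
  | zero => simp [Qc, Apoly]
  | succ n ih =>
    have hd : derivative ((Apoly n).map (algebraMap ℝ ℂ)) =
        (derivative (Apoly n)).map (algebraMap ℝ ℂ) := by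
      rw [Polynomial.derivative_map]
    rw [show Qc (n+1) = derivative (Qc n) - 3 * X ^ 2 * Qc n from rfl, ih,
      show Apoly (n+1) = 3 * X ^ 2 * Apoly n - derivative (Apoly n) from rfl]
    rw [Polynomial.map_sub, Polynomial.map_mul, Polynomial.map_mul, Polynomial.map_pow,
      Polynomial.map_ofNat, Polynomial.map_X, ← hd]
    rw [derivative_mul, derivative_pow]
    simp
    ring

lemma iter_eq (n : ℕ) :
    iteratedDeriv n (fun z : ℂ => Complex.exp (-z ^ 3)) =
      fun x => Complex.exp (-x ^ 3) * (Qc n).eval x := by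
  induction n with
  | zero => funext x; simp [Qc]
  | succ n ih =>
    rw [iteratedDeriv_succ, ih]
    funext x
    have h1 : HasDerivAt (fun x : ℂ => Complex.exp (-x ^ 3))
        (Complex.exp (-x ^ 3) * (-(3 * x ^ 2))) x := by
      have := ((hasDerivAt_pow 3 x).neg).cexp
      simpa using this
    have h2 : HasDerivAt (fun x : ℂ => (Qc n).eval x)
        ((derivative (Qc n)).eval x) x := Polynomial.hasDerivAt _ x
    have h := (h1.mul h2).deriv
    rw [show (fun x => Complex.exp (-x ^ 3) * eval x (Qc n)) =
      ((fun x => Complex.exp (-x ^ 3)) * fun x => eval x (Qc n)) from rfl, h]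
    simp only [Qc, eval_sub, eval_mul, eval_pow, eval_ofNat, eval_X]
    ring

lemma alg0 (c : ℝ) (R : ℝ[X]) :
    3 * X ^ 2 * (C c * X ^ 0 * R.comp (X ^ 3)) - derivative (C c * X ^ 0 * R.comp (X ^ 3)) =
      C (3 * c) * X ^ 2 * ((R - derivative R).comp (X ^ 3)) := by
  simp only [derivative_mul, derivative_C, derivative_comp, derivative_X_pow, derivative_X,
    sub_comp, mul_comp, X_comp, C_comp, pow_zero, pow_one, mul_one, one_mul, zero_mul,
    zero_add, Nat.cast_ofNat, C_mul, map_ofNat]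
  ring

lemma alg1 (c : ℝ) (R : ℝ[X]) :
    3 * X ^ 2 * (C c * X ^ 1 * R.comp (X ^ 3)) - derivative (C c * X ^ 1 * R.comp (X ^ 3)) =
      C (3 * c) * X ^ 0 * (((X - C (1/3)) * R - X * derivative R).comp (X ^ 3)) := by
  have hc3 : (C (3 : ℝ)) = 3 := map_ofNat C 3
  have h13 : (3 : ℝ[X]) * C (1/3 : ℝ) = 1 := by rw [← hc3, ← C_mul]; norm_num
  simp only [derivative_mul, derivative_C, derivative_comp, derivative_X_pow, derivative_X,
    sub_comp, mul_comp, X_comp, C_comp, pow_zero, pow_one, mul_one, one_mul, zero_mul,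
    zero_add, Nat.cast_ofNat, C_mul, map_ofNat]
  linear_combination (C c * R.comp (X ^ 3)) * h13

lemma alg2 (c : ℝ) (R : ℝ[X]) :
    3 * X ^ 2 * (C c * X ^ 2 * R.comp (X ^ 3)) - derivative (C c * X ^ 2 * R.comp (X ^ 3)) =
      C (3 * c) * X ^ 1 * (((X - C (2/3)) * R - X * derivative R).comp (X ^ 3)) := by
  have hc3 : (C (3 : ℝ)) = 3 := map_ofNat C 3
  have h23 : (3 : ℝ[X]) * C (2/3 : ℝ) = 2 := by
    rw [← hc3, ← C_mul, show (3 : ℝ) * (2/3) = 2 by norm_num]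
    exact map_ofNat C 2
  simp only [derivative_mul, derivative_C, derivative_comp, derivative_X_pow, derivative_X,
    sub_comp, mul_comp, X_comp, C_comp, pow_zero, pow_one, mul_one, one_mul, zero_mul,
    zero_add, Nat.cast_ofNat, C_mul, map_ofNat]
  linear_combination (X * C c * R.comp (X ^ 3)) * h23

lemma invariant (n : ℕ) : ∃ (m : ℕ) (r : Fin m → ℝ), StrictMono r ∧ (∀ i, 0 < r i) ∧
    2 * n = 3 * m + 2 * n % 3 ∧
    Apoly n = C ((3:ℝ)^n) * X ^ (2 * n % 3) * (Rpoly r).comp (X ^ 3) := by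
  induction n with
  | zero =>
    refine ⟨0, fun i => i.elim0, fun i => i.elim0, fun i => i.elim0, by norm_num, ?_⟩
    rw [show Apoly 0 = 1 from rfl]
    simp [Rpoly]
  | succ n ih =>
    obtain ⟨m, r, hr, h0, harith, heq⟩ := ih
    have hrec : Apoly (n+1) = 3 * X ^ 2 * Apoly n - derivative (Apoly n) := rfl
    have hC : C ((3:ℝ) * 3^n) = C ((3:ℝ)^(n+1)) := by
      congr 1
      rw [pow_succ]
      ring
    have h3 : (2*n) % 3 = 0 ∨ (2*n) % 3 = 1 ∨ (2*n) % 3 = 2 := by omega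
    rcases h3 with h | h | h
    · obtain ⟨ρ, hρ1, hρ2, hρ3⟩ := engine_zero m r hr h0
      refine ⟨m, ρ, hρ1, hρ2, by omega, ?_⟩
      have hmod : 2 * (n+1) % 3 = 2 := by omega
      rw [hmod, hrec, heq, h, alg0, hρ3, hC]
    · obtain ⟨ρ, hρ1, hρ2, hρ3⟩ := engine_pos m r hr h0 (1/3) (by norm_num)
      refine ⟨m + 1, ρ, hρ1, hρ2, by omega, ?_⟩
      have hmod : 2 * (n+1) % 3 = 0 := by omega
      rw [hmod, hrec, heq, h, alg1, hρ3, hC]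
    · obtain ⟨ρ, hρ1, hρ2, hρ3⟩ := engine_pos m r hr h0 (2/3) (by norm_num)
      refine ⟨m + 1, ρ, hρ1, hρ2, by omega, ?_⟩
      have hmod : 2 * (n+1) % 3 = 1 := by omega
      rw [hmod, hrec, heq, h, alg2, hρ3, hC]

/-- Every complex zero `z` of the diagonal polynomial `Pₙ`
satisfies `z³ ∈ ℝ` and `z³ ≥ 0`, i.e. all zeros lie on the union of the three
closed rays `[0,∞) ∪ ω·[0,∞) ∪ ω²·[0,∞)`. -/
theorem stmt12 (n : ℕ) (z : ℂ) (hz : P n z = 0) :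
    (z ^ 3).im = 0 ∧ 0 ≤ (z ^ 3).re := by
  -- Step 1: `z` is a root of the polynomial `Qc n`.
  have hq : (Qc n).eval z = 0 := by
    have h := hz
    rw [P, iter_eq n] at h
    rcases mul_eq_zero.1 h with h' | h'
    · rcases mul_eq_zero.1 h' with h'' | h''
      · exfalso
        refine (div_ne_zero (pow_ne_zero _ ?_) (pow_ne_zero _ ?_)) h'' <;> norm_num
      · exact absurd h'' (Complex.exp_ne_zero _)
    · rcases mul_eq_zero.1 h' with h'' | h''
      · exact absurd h'' (Complex.exp_ne_zero _)
      · exact h''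
  -- Step 2: `z` is a root of the real polynomial `Apoly n` (mapped to `ℂ`).
  have ha : ((Apoly n).map (algebraMap ℝ ℂ)).eval z = 0 := by
    rw [Qc_eq_Apoly] at hq
    rw [eval_mul] at hq
    rcases mul_eq_zero.1 hq with h' | h'
    · exfalso
      have : ((-1 : Polynomial ℂ) ^ n).eval z = (-1 : ℂ) ^ n := by simp
      rw [this] at h'
      exact (pow_ne_zero _ (by norm_num)) h'
    · exact h'
  -- Step 3: use the factorization of `Apoly n`.
  obtain ⟨m, r, hr, h0, harith, heq⟩ := invariant n
  rw [heq] at ha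
  rw [Polynomial.map_mul, Polynomial.map_mul, Polynomial.map_pow, Polynomial.map_X,
    Polynomial.map_C, Polynomial.map_comp, Polynomial.map_pow, Polynomial.map_X] at ha
  rw [eval_mul, eval_mul, eval_comp, eval_pow, eval_pow, eval_X, eval_C] at ha
  have h3n : algebraMap ℝ ℂ ((3:ℝ)^n) ≠ 0 := by
    simp only [map_pow]
    exact pow_ne_zero _ (by norm_num [Algebra.algebraMap_eq_smul_one])
  rcases mul_eq_zero.1 ha with h' | hprod
  · rcases mul_eq_zero.1 h' with h'' | h''
    · exact absurd h'' h3n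
    · -- z ^ s = 0, hence z = 0
      have hz0 : z = 0 := by
        by_contra hc
        exact (pow_ne_zero _ hc) h''
      rw [hz0]
      norm_num
  · -- z³ is one of the positive real roots
    rw [Rpoly] at hprod
    rw [Polynomial.map_prod] at hprod
    rw [eval_prod] at hprod
    obtain ⟨i, -, hi⟩ := Finset.prod_eq_zero_iff.1 hprod
    rw [Polynomial.map_sub, Polynomial.map_X, Polynomial.map_C, eval_sub, eval_X, eval_C,
      sub_eq_zero] at hi
    rw [hi]
    have hcoe : algebraMap ℝ ℂ (r i) = ((r i : ℝ) : ℂ) := rfl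
    rw [hcoe]
    exact ⟨Complex.ofReal_im _, by simpa using (h0 i).le⟩
end

section
/- Let n ≥ 1 and let x_1 > x_2 > ⋯ > x_k be the zeros of P_{n−1} in (0,∞) and y_1 > y_2 > ⋯ be the zeros of P_n in (0,∞). Then the zeros interlace: y_1 > x_1, and x_j < y_j < x_{j−1} for 2 ≤ j ≤ k; moreover, when n ≡ 0 (mod 3) or n ≡ 2 (mod 3) there is an additional zero y_{k+1} of P_n with 0 < y_{k+1} < x_k. -/
open Polynomial Filter Set

noncomputable def qq : ℕ → Polynomial ℝ
  | 0 => 1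
  | n+1 => X^2 * qq n - C (3⁻¹ : ℝ) * derivative (qq n)

lemma natDegree_qq_le (n : ℕ) : (qq n).natDegree ≤ 2*n := by
  induction n with
  | zero => simp [qq]
  | succ n ih =>
    rw [qq]
    refine le_trans (natDegree_sub_le _ _) (max_le ?_ ?_)
    · refine le_trans (natDegree_mul_le) ?_
      simp only [natDegree_X_pow]
      omega
    · refine le_trans (natDegree_mul_le) ?_
      have := natDegree_derivative_le (qq n)
      simp only [natDegree_C]
      omega

lemma coeff_qq_top (n : ℕ) : (qq n).coeff (2*n) = 1 := by
  induction n with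
  | zero => simp [qq]
  | succ n ih =>
    rw [qq]
    have h1 : (X^2 * qq n).coeff (2*(n+1)) = 1 := by
      have : 2*(n+1) = (2*n) + 2 := by ring
      rw [this, coeff_X_pow_mul, ih]
    have h2 : (C (3⁻¹ : ℝ) * derivative (qq n)).coeff (2*(n+1)) = 0 := by
      rw [coeff_C_mul]
      have : (derivative (qq n)).natDegree < 2*(n+1) := by
        have := natDegree_derivative_le (qq n)
        have := natDegree_qq_le n
        omega
      rw [coeff_eq_zero_of_natDegree_lt this, mul_zero]
    rw [coeff_sub, h1, h2, sub_zero]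

lemma qq_ne_zero (n : ℕ) : qq n ≠ 0 := by
  intro h
  have := coeff_qq_top n
  rw [h] at this
  simp at this

lemma coeff_qq_eq_zero (n : ℕ) : ∀ i, i % 3 ≠ (2*n) % 3 → (qq n).coeff i = 0 := by
  induction n with
  | zero =>
    intro i hi
    simp only [Nat.mul_zero, Nat.zero_mod] at hi
    rcases i with _ | j
    · omega
    · simp [qq, coeff_one]
  | succ n ih =>
    intro i hi
    rw [qq, coeff_sub, coeff_C_mul, coeff_derivative]
    have h1 : (X^2 * qq n).coeff i = 0 := by
      rcases Nat.lt_or_ge i 2 with h | h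
      · rw [coeff_X_pow_mul']
        simp [Nat.not_le.mpr h]
      · obtain ⟨j, rfl⟩ : ∃ j, i = j + 2 := ⟨i - 2, by omega⟩
        rw [coeff_X_pow_mul]
        exact ih j (by omega)
    have h2 : (qq n).coeff (i+1) = 0 := ih (i+1) (by omega)
    rw [h1, h2]
    ring

lemma iteratedDeriv_exp_cube (n : ℕ) (z : ℂ) :
    iteratedDeriv n (fun z : ℂ => Complex.exp (-z ^ 3)) z
      = (-3)^n * ((qq n).map (algebraMap ℝ ℂ)).eval z * Complex.exp (-z ^ 3) := by
  induction n generalizing z with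
  | zero => simp [qq]
  | succ n ih =>
    rw [iteratedDeriv_succ]
    have hcong : deriv (iteratedDeriv n (fun z : ℂ => Complex.exp (-z ^ 3))) z
        = deriv (fun w => (-3)^n * ((qq n).map (algebraMap ℝ ℂ)).eval w * Complex.exp (-w ^ 3)) z := by
      apply Filter.EventuallyEq.deriv_eq
      exact Filter.Eventually.of_forall fun w => ih w
    rw [hcong]
    have hpoly : HasDerivAt (fun w : ℂ => ((qq n).map (algebraMap ℝ ℂ)).eval w)
        ((derivative ((qq n).map (algebraMap ℝ ℂ))).eval z) z := Polynomial.hasDerivAt _ z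
    have hcube : HasDerivAt (fun w : ℂ => -w ^ 3) (-(3 * z ^ 2)) z := by
      have := (hasDerivAt_pow 3 z).fun_neg
      simpa using this
    have hexp : HasDerivAt (fun w : ℂ => Complex.exp (-w ^ 3))
        (-(3 * z ^ 2) * Complex.exp (-z ^ 3)) z := by
      simpa [mul_comm] using hcube.cexp
    have hprod := ((hpoly.const_mul ((-3 : ℂ)^n)).fun_mul hexp)
    rw [hprod.deriv]
    have hmap : (qq (n+1)).map (algebraMap ℝ ℂ)
        = X^2 * ((qq n).map (algebraMap ℝ ℂ))
          - C ((3 : ℂ)⁻¹) * derivative ((qq n).map (algebraMap ℝ ℂ)) := by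
      rw [qq]
      simp [Polynomial.map_sub, Polynomial.map_mul, Polynomial.map_pow, derivative_map,
        map_inv₀, Polynomial.map_ofNat]
    rw [hmap]
    simp only [eval_sub, eval_mul, eval_pow, eval_X, eval_C]
    ring

lemma P_eq_qq (n : ℕ) (t : ℝ) : P n ((t : ℝ) : ℂ) = (((qq n).eval t : ℝ) : ℂ) := by
  rw [P, iteratedDeriv_exp_cube]
  have h1 : ((qq n).map (algebraMap ℝ ℂ)).eval ((t : ℝ) : ℂ) = (((qq n).eval t : ℝ) : ℂ) := by
    rw [eval_map]
    exact Polynomial.eval₂_at_apply (algebraMap ℝ ℂ) t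
  rw [h1]
  have h2 : Complex.exp (((t:ℝ):ℂ) ^ 3) * Complex.exp (-((t:ℝ):ℂ) ^ 3) = 1 := by
    rw [← Complex.exp_add]; simp
  have h3 : ((-1 : ℂ)) ^ n / 3 ^ n * (-3 : ℂ) ^ n = 1 := by
    rw [neg_pow, neg_pow (3:ℂ)]
    have h9 : ((-1:ℂ))^n * ((-1:ℂ))^n = 1 := by
      rw [← pow_add]
      exact (neg_one_pow_eq_one_iff_even (by norm_num)).mpr (Even.add_self n)
    field_simp
    rw [sq, h9, one_pow, one_mul]
  calc (-1) ^ n / 3 ^ n * Complex.exp (((t:ℝ):ℂ) ^ 3) *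
      ((-3) ^ n * (((qq n).eval t : ℝ) : ℂ) * Complex.exp (-((t:ℝ):ℂ) ^ 3))
      = ((-1) ^ n / 3 ^ n * (-3:ℂ) ^ n) *
        (Complex.exp (((t:ℝ):ℂ) ^ 3) * Complex.exp (-((t:ℝ):ℂ) ^ 3)) * (((qq n).eval t : ℝ) : ℂ) := by ring
    _ = (((qq n).eval t : ℝ) : ℂ) := by rw [h2, h3, one_mul, one_mul]

lemma P_zero_iff (n : ℕ) (t : ℝ) : P n ((t : ℝ) : ℂ) = 0 ↔ (qq n).eval t = 0 := by
  rw [P_eq_qq]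
  exact_mod_cast Complex.ofReal_eq_zero

noncomputable def Z (n : ℕ) : Finset ℝ := (qq n).roots.toFinset.filter (0 < ·)

lemma mem_Z {n : ℕ} {t : ℝ} : t ∈ Z n ↔ 0 < t ∧ (qq n).eval t = 0 := by
  rw [Z, Finset.mem_filter, Multiset.mem_toFinset, mem_roots (qq_ne_zero n)]
  unfold IsRoot
  tauto

lemma card_Z_le (n : ℕ) : (Z n).card ≤ 2*n/3 := by
  set r := 2*n % 3 with hr
  set d := 2*n / 3 with hd
  have hrd : r + 3*d = 2*n := by omega
  set h : Polynomial ℝ := ∑ j ∈ Finset.range (d+1), C ((qq n).coeff (r + 3*j)) * X^j with hh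
  have hcoe : h.coeff d = 1 := by
    rw [hh, finset_sum_coeff]
    rw [Finset.sum_eq_single d]
    · rw [coeff_C_mul_X_pow, if_pos rfl, hrd, coeff_qq_top]
    · intro j hj hjd
      rw [coeff_C_mul_X_pow, if_neg (by omega)]
    · intro hmem
      exact absurd (Finset.mem_range.mpr (by omega)) hmem
  have hne : h ≠ 0 := fun h0 => by simp [h0] at hcoe
  have hdeg : h.natDegree ≤ d := by
    refine natDegree_sum_le_of_forall_le _ _ fun j hj => ?_
    refine le_trans (natDegree_C_mul_X_pow_le _ _) ?_
    exact Nat.lt_succ_iff.mp (Finset.mem_range.mp hj)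
  have heval : ∀ t : ℝ, (qq n).eval t = t^r * h.eval (t^3) := by
    intro t
    have h1 : (qq n).eval t = ∑ i ∈ Finset.range (2*n+1), (qq n).coeff i * t^i :=
      eval_eq_sum_range' (Nat.lt_succ_of_le (natDegree_qq_le n)) t
    have h2 : h.eval (t^3) = ∑ j ∈ Finset.range (d+1), (qq n).coeff (r + 3*j) * (t^3)^j := by
      rw [hh, eval_finset_sum]
      simp [eval_C, eval_pow, eval_X]
    rw [h1, h2, Finset.mul_sum]
    rw [← Finset.sum_filter_add_sum_filter_not (Finset.range (2*n+1)) (fun i => i % 3 = r)]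
    have hzero : ∑ i ∈ (Finset.range (2*n+1)).filter (fun i => ¬ i % 3 = r),
        (qq n).coeff i * t^i = 0 := by
      refine Finset.sum_eq_zero fun i hi => ?_
      rw [Finset.mem_filter] at hi
      rw [coeff_qq_eq_zero n i (by omega), zero_mul]
    rw [hzero, add_zero]
    refine Finset.sum_nbij' (fun i => (i - r)/3) (fun j => r + 3*j) ?_ ?_ ?_ ?_ ?_
    · intro i hi
      rw [Finset.mem_filter, Finset.mem_range] at hi
      exact Finset.mem_range.mpr (by omega)
    · intro j hj
      rw [Finset.mem_range] at hj
      rw [Finset.mem_filter, Finset.mem_range]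
      omega
    · intro i hi
      rw [Finset.mem_filter, Finset.mem_range] at hi
      omega
    · intro j hj
      omega
    · intro i hi
      rw [Finset.mem_filter, Finset.mem_range] at hi
      have hre : r + 3*((i-r)/3) = i := by omega
      rw [hre]
      rw [mul_comm (t^r) _, mul_assoc, ← pow_mul, ← pow_add]
      congr 2
      omega
  -- injection t ↦ t^3 into roots of h
  have hinj : Set.InjOn (fun t : ℝ => t^3) ↑(Z n) := by
    intro a ha b hb hab
    have ha' := (mem_Z.mp ha).1
    have hb' := (mem_Z.mp hb).1
    simp only at hab
    exact pow_left_strictMonoOn₀ (M₀ := ℝ) (n := 3) (by norm_num) |>.injOn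
      (le_of_lt ha') (le_of_lt hb') hab
  have hmaps : ∀ t ∈ Z n, t^3 ∈ h.roots.toFinset := by
    intro t ht
    obtain ⟨htpos, htroot⟩ := mem_Z.mp ht
    rw [Multiset.mem_toFinset, mem_roots hne]
    have := heval t
    rw [htroot] at this
    have htr : (0:ℝ) < t^r := pow_pos htpos r
    unfold IsRoot
    rcases mul_eq_zero.mp this.symm with h1 | h1
    · exact absurd h1 (ne_of_gt htr)
    · exact h1
  calc (Z n).card ≤ h.roots.toFinset.card := Finset.card_le_card_of_injOn _ hmaps hinj
    _ ≤ Multiset.card h.roots := h.roots.toFinset_card_le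
    _ ≤ h.natDegree := h.card_roots'
    _ ≤ d := hdeg

lemma hasDerivAt_phi (n : ℕ) (t : ℝ) :
    HasDerivAt (fun s => (qq n).eval s * Real.exp (-s^3))
      (-3 * ((qq (n+1)).eval t * Real.exp (-t^3))) t := by
  have hpoly : HasDerivAt (fun s : ℝ => (qq n).eval s) ((derivative (qq n)).eval t) t :=
    Polynomial.hasDerivAt _ t
  have hcube : HasDerivAt (fun s : ℝ => -s^3) (-(3*t^2)) t := by
    simpa using (hasDerivAt_pow 3 t).fun_neg
  have hexp : HasDerivAt (fun s : ℝ => Real.exp (-s^3)) (-(3*t^2) * Real.exp (-t^3)) t := by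
    simpa [mul_comm] using hcube.exp
  have := hpoly.fun_mul hexp
  refine this.congr_deriv ?_
  have : (qq (n+1)).eval t = t^2 * (qq n).eval t - 3⁻¹ * (derivative (qq n)).eval t := by
    rw [qq]; simp
  rw [this]
  ring

lemma abs_eval_le (p : Polynomial ℝ) (t : ℝ) (ht : 1 ≤ t) :
    |p.eval t| ≤ (∑ i ∈ Finset.range (p.natDegree + 1), |p.coeff i|) * t ^ p.natDegree := by
  rw [eval_eq_sum_range, Finset.sum_mul]
  refine le_trans (Finset.abs_sum_le_sum_abs _ _) (Finset.sum_le_sum fun i hi => ?_)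
  rw [abs_mul, abs_pow, abs_of_nonneg (by linarith : (0:ℝ) ≤ t)]
  refine mul_le_mul_of_nonneg_left ?_ (abs_nonneg _)
  exact pow_le_pow_right₀ ht (Nat.lt_succ_iff.mp (Finset.mem_range.mp hi))

lemma tendsto_phi (n : ℕ) :
    Tendsto (fun s => (qq n).eval s * Real.exp (-s^3)) atTop (nhds 0) := by
  set p := qq n
  set Cst := ∑ i ∈ Finset.range (p.natDegree + 1), |p.coeff i| with hC
  have hC0 : 0 ≤ Cst := Finset.sum_nonneg fun i _ => abs_nonneg _
  have hg : Tendsto (fun s : ℝ => Cst * (s ^ p.natDegree * Real.exp (-s))) atTop (nhds 0) := by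
    have := (Real.tendsto_pow_mul_exp_neg_atTop_nhds_zero p.natDegree).const_mul Cst
    simpa using this
  have hbound : ∀ᶠ s in atTop, |(fun s => p.eval s * Real.exp (-s^3)) s|
      ≤ Cst * (s ^ p.natDegree * Real.exp (-s)) := by
    filter_upwards [eventually_ge_atTop (1:ℝ)] with s hs
    rw [abs_mul, abs_of_pos (Real.exp_pos _)]
    have h1 : |p.eval s| ≤ Cst * s ^ p.natDegree := abs_eval_le p s hs
    have h2 : Real.exp (-s^3) ≤ Real.exp (-s) := by
      apply Real.exp_le_exp.mpr
      nlinarith [mul_nonneg (mul_nonneg (by linarith : (0:ℝ) ≤ s) (by linarith : (0:ℝ) ≤ s - 1)) (by linarith : (0:ℝ) ≤ s + 1)]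
    calc |p.eval s| * Real.exp (-s^3) ≤ (Cst * s ^ p.natDegree) * Real.exp (-s) := by
          apply mul_le_mul h1 h2 (le_of_lt (Real.exp_pos _))
          positivity
      _ = Cst * (s ^ p.natDegree * Real.exp (-s)) := by ring
  have habs : Tendsto (fun s => |(fun s => p.eval s * Real.exp (-s^3)) s|) atTop (nhds 0) := by
    apply squeeze_zero' (Filter.Eventually.of_forall fun s => abs_nonneg _) hbound hg
  exact (tendsto_zero_iff_abs_tendsto_zero _).mpr habs

lemma roll1 (n : ℕ) {a b : ℝ} (hab : a < b) (ha : (qq n).eval a = 0) (hb : (qq n).eval b = 0) :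
    ∃ c, a < c ∧ c < b ∧ (qq (n+1)).eval c = 0 := by
  have hcont : ContinuousOn (fun s => (qq n).eval s * Real.exp (-s^3)) (Icc a b) :=
    Continuous.continuousOn (by
      exact ((qq n).continuous_aeval).mul (Real.continuous_exp.comp (by continuity)))
  obtain ⟨c, hc, hc0⟩ := exists_deriv_eq_zero hab hcont (by simp [ha, hb])
  refine ⟨c, hc.1, hc.2, ?_⟩
  have := (hasDerivAt_phi n c).deriv
  rw [this] at hc0
  rcases mul_eq_zero.mp hc0 with h | h
  · norm_num at h
  rcases mul_eq_zero.mp h with h | h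
  · exact h
  · exact absurd h (Real.exp_ne_zero _)

lemma rolle_top_aux {f f' : ℝ → ℝ} (hdf : ∀ x, HasDerivAt f (f' x) x)
    (htop : Tendsto f atTop (nhds 0)) {a c : ℝ} (hac : a < c) (hfa : f a = 0)
    (hfc : 0 < f c) : ∃ d, a < d ∧ f' d = 0 := by
  have hev : ∀ᶠ t in atTop, f t < f c := htop.eventually_lt_const hfc
  obtain ⟨R, hR⟩ := eventually_atTop.mp hev
  set b := max R c + 1 with hb
  have hcb : c < b := by
    have := le_max_right R c
    simp only [hb]; linarith
  have hab : a < b := lt_trans hac hcb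
  have hfb : f b < f c := hR b (by simp only [hb]; linarith [le_max_left R c])
  have hcont : ContinuousOn f (Icc a b) :=
    fun x _ => ((hdf x).continuousAt).continuousWithinAt
  obtain ⟨d, hd, hmax⟩ := isCompact_Icc.exists_isMaxOn (nonempty_Icc.mpr hab.le) hcont
  have hfd : f c ≤ f d := hmax (mem_Icc.mpr ⟨hac.le, hcb.le⟩)
  have hda : d ≠ a := fun h => by rw [h, hfa] at hfd; linarith
  have hdb : d ≠ b := fun h => by rw [h] at hfd; linarith
  have hdIoo : d ∈ Ioo a b := by
    rcases mem_Icc.mp hd with ⟨h1, h2⟩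
    exact ⟨lt_of_le_of_ne h1 (Ne.symm hda), lt_of_le_of_ne h2 hdb⟩
  have hloc : IsLocalMax f d := hmax.isLocalMax (Icc_mem_nhds hdIoo.1 hdIoo.2)
  exact ⟨d, hdIoo.1, by rw [← (hdf d).deriv]; exact hloc.deriv_eq_zero⟩

lemma roll2 (n : ℕ) {a : ℝ} (ha : (qq n).eval a = 0) :
    ∃ c, a < c ∧ (qq (n+1)).eval c = 0 := by
  -- find a point beyond a where qq n does not vanish
  have hex : ∃ c₀, a < c₀ ∧ (qq n).eval c₀ ≠ 0 := by
    by_contra h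
    push_neg at h
    have : qq n = 0 := by
      refine Polynomial.eq_zero_of_infinite_isRoot _ ?_
      refine Set.Infinite.mono ?_ (Set.Ioi_infinite a)
      intro t ht
      exact h t ht
    exact qq_ne_zero n this
  obtain ⟨c₀, hac₀, hc₀⟩ := hex
  set f := fun s => (qq n).eval s * Real.exp (-s^3) with hf
  set f' := fun t => -3 * ((qq (n+1)).eval t * Real.exp (-t^3)) with hf'
  have hdf : ∀ t, HasDerivAt f (f' t) t := fun t => hasDerivAt_phi n t
  have hfa : f a = 0 := by simp [hf, ha]
  have hfc : f c₀ ≠ 0 := mul_ne_zero hc₀ (Real.exp_ne_zero _)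
  have key : ∃ d, a < d ∧ f' d = 0 := by
    rcases hfc.lt_or_gt with h | h
    · obtain ⟨d, hd1, hd2⟩ := rolle_top_aux (f := fun s => -f s) (f' := fun s => -f' s)
        (fun t => (hdf t).neg) (by simpa using (tendsto_phi n).neg) hac₀ (by simp [hfa]) (by show 0 < -f c₀; linarith)
      exact ⟨d, hd1, by
        have : -f' d = 0 := hd2
        linarith⟩
    · exact rolle_top_aux hdf (tendsto_phi n) hac₀ hfa h
  obtain ⟨d, hd1, hd2⟩ := key
  refine ⟨d, hd1, ?_⟩
  simp only [hf'] at hd2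
  rcases mul_eq_zero.mp hd2 with h | h
  · norm_num at h
  rcases mul_eq_zero.mp h with h | h
  · exact h
  · exact absurd h (Real.exp_ne_zero _)

lemma qq_eval_zero (n : ℕ) (hn : n % 3 ≠ 0) : (qq n).eval 0 = 0 := by
  rw [← coeff_zero_eq_eval_zero]
  exact coeff_qq_eq_zero n 0 (by omega)

/-- Gap roots: for a strictly decreasing family of roots of `qq n`, there is a strictly
decreasing family of roots of `qq (n+1)`, one strictly above each `x i` and (for `i ≥ 1`)
strictly below `x (i-1)`. -/
lemma exists_gaps (n k : ℕ) (x : Fin k → ℝ) (hanti : StrictAnti x)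
    (hroot : ∀ i, (qq n).eval (x i) = 0) :
    ∃ g : Fin k → ℝ, StrictAnti g ∧ (∀ i, (qq (n+1)).eval (g i) = 0) ∧
      (∀ i, x i < g i) ∧
      ∀ (i : Fin k) (h : 1 ≤ (i : ℕ)), g i < x ⟨(i : ℕ) - 1, by omega⟩ := by
  have H : ∀ i : Fin k, ∃ c, (qq (n+1)).eval c = 0 ∧ x i < c ∧
      ∀ h : 1 ≤ (i : ℕ), c < x ⟨(i : ℕ) - 1, by omega⟩ := by
    intro i
    rcases Nat.eq_zero_or_pos (i : ℕ) with h0 | h1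
    · obtain ⟨c, hc1, hc2⟩ := roll2 n (hroot i)
      exact ⟨c, hc2, hc1, fun h => absurd h (by omega)⟩
    · have hlt : x i < x ⟨(i : ℕ) - 1, by omega⟩ := by
        apply hanti
        simp [Fin.lt_def]
        omega
      obtain ⟨c, hc1, hc2, hc3⟩ := roll1 n hlt (hroot i) (hroot _)
      exact ⟨c, hc3, hc1, fun _ => hc2⟩
  choose g hg1 hg2 hg3 using H
  refine ⟨g, ?_, hg1, hg2, hg3⟩
  intro i j hij
  have hj1 : 1 ≤ (j : ℕ) := by
    have := hij
    rw [Fin.lt_def] at this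
    omega
  have h1 : g j < x ⟨(j : ℕ) - 1, by omega⟩ := hg3 j hj1
  have h2 : x ⟨(j : ℕ) - 1, by omega⟩ ≤ x i := by
    apply hanti.antitone
    rw [Fin.le_def]
    simp only
    rw [Fin.lt_def] at hij
    omega
  linarith [hg2 i]

lemma exists_bottom (n k : ℕ) (h0 : (qq n).eval 0 = 0) (x : Fin k → ℝ)
    (hanti : StrictAnti x) (hroot : ∀ i, (qq n).eval (x i) = 0) (hpos : ∀ i, 0 < x i) :
    ∃ b, 0 < b ∧ (qq (n+1)).eval b = 0 ∧ ∀ i, b < x i := by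
  rcases Nat.eq_zero_or_pos k with hk | hk
  · obtain ⟨c, hc1, hc2⟩ := roll2 n h0
    exact ⟨c, hc1, hc2, fun i => absurd i.2 (by omega)⟩
  · set last : Fin k := ⟨k - 1, by omega⟩ with hlast
    obtain ⟨c, hc1, hc2, hc3⟩ := roll1 n (hpos last) h0 (hroot last)
    refine ⟨c, hc1, hc3, fun i => lt_of_lt_of_le hc2 ?_⟩
    apply hanti.antitone
    rw [Fin.le_def]
    simp only [hlast]
    omega

lemma card_ge_of_inj {m : ℕ} (S : Finset ℝ) (g : Fin m → ℝ) (hinj : Function.Injective g)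
    (hmem : ∀ i, g i ∈ S) : m ≤ S.card := by
  have h1 : (Finset.univ.image g).card = m := by
    rw [Finset.card_image_of_injective _ hinj, Finset.card_univ, Fintype.card_fin]
  rw [← h1]
  apply Finset.card_le_card
  intro t ht
  obtain ⟨i, _, rfl⟩ := Finset.mem_image.mp ht
  exact hmem i

/-- The decreasing enumeration of Z n. -/
noncomputable def zen (n : ℕ) : Fin (Z n).card → ℝ :=
  fun i => ((Z n).orderIsoOfFin rfl i.rev : ℝ)

lemma zen_anti (n : ℕ) : StrictAnti (zen n) := by
  intro i j hij
  have : j.rev < i.rev := by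
    rw [Fin.lt_def] at hij ⊢
    simp [Fin.rev]
    omega
  exact_mod_cast ((Z n).orderIsoOfFin rfl).strictMono this

lemma zen_mem (n : ℕ) (i : Fin (Z n).card) : zen n i ∈ Z n := by
  exact ((Z n).orderIsoOfFin rfl i.rev).2

lemma card_Z (n : ℕ) : (Z n).card = 2*n/3 := by
  induction n with
  | zero =>
    simp [Z, show qq 0 = 1 from rfl]
  | succ n ih =>
    have hupper := card_Z_le (n+1)
    set k := (Z n).card with hk
    obtain ⟨g, hganti, hgroot, hggt, hglt⟩ := exists_gaps n k (zen n) (zen_anti n)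
      (fun i => (mem_Z.mp (zen_mem n i)).2)
    have hgmem : ∀ i, g i ∈ Z (n+1) := by
      intro i
      refine mem_Z.mpr ⟨?_, hgroot i⟩
      exact lt_trans (mem_Z.mp (zen_mem n i)).1 (hggt i)
    by_cases h3 : n % 3 = 0
    · -- n % 3 = 0 : lower bound k suffices
      have hlow : k ≤ (Z (n+1)).card := card_ge_of_inj _ g hganti.injective hgmem
      omega
    · -- extra root near 0
      have h0 : (qq n).eval 0 = 0 := qq_eval_zero n h3
      obtain ⟨b, hb1, hb2, hb3⟩ := exists_bottom n k h0 (zen n) (zen_anti n)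
        (fun i => (mem_Z.mp (zen_mem n i)).2) (fun i => (mem_Z.mp (zen_mem n i)).1)
      have hbmem : b ∈ Z (n+1) := mem_Z.mpr ⟨hb1, hb2⟩
      have hbg : ∀ i, b < g i := fun i => lt_trans (hb3 i) (hggt i)
      -- family of size (k+1)
      set G : Fin (k+1) → ℝ := fun i => if h : (i : ℕ) < k then g ⟨i, h⟩ else b with hG
      have hGanti : StrictAnti G := by
        intro i j hij
        rw [Fin.lt_def] at hij
        by_cases hjk : (j : ℕ) < k
        · have hik : (i : ℕ) < k := by omega
          simp only [hG, dif_pos hjk, dif_pos hik]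
          exact hganti (by rw [Fin.lt_def]; exact hij)
        · have hik : (i : ℕ) < k := by omega
          simp only [hG, dif_pos hik, dif_neg hjk]
          exact hbg _
      have hGmem : ∀ i, G i ∈ Z (n+1) := by
        intro i
        by_cases hik : (i : ℕ) < k
        · simp only [hG, dif_pos hik]; exact hgmem _
        · simp only [hG, dif_neg hik]; exact hbmem
      have hlow : k + 1 ≤ (Z (n+1)).card := card_ge_of_inj _ G hGanti.injective hGmem
      omega

lemma div3_succ (m : ℕ) :
    (m % 3 = 0 → 2*(m+1)/3 = 2*m/3) ∧ (m % 3 ≠ 0 → 2*(m+1)/3 = 2*m/3 + 1) := by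
  obtain ⟨t, r, hr, rfl⟩ : ∃ t r, r < 3 ∧ m = 3*t + r := ⟨m/3, m%3, by omega, by omega⟩
  interval_cases r <;> constructor <;> intro h <;> omega

lemma count_lt {l : ℕ} (y : Fin l → ℝ) (hyanti : StrictAnti y) {M : ℕ} (v : Fin M → ℝ)
    (hvinj : Function.Injective v) (hvy : ∀ i, ∃ a, y a = v i) (jj : Fin l)
    (hgt : ∀ i, y jj < v i) : M ≤ (jj : ℕ) := by
  choose w hw using hvy
  have hwinj : Function.Injective w := fun a b hab => hvinj (by rw [← hw a, ← hw b, hab])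
  have hub : ∀ i, (w i : ℕ) < (jj : ℕ) := by
    intro i
    have h1 : y jj < y (w i) := by rw [hw]; exact hgt i
    exact hyanti.lt_iff_gt.mp h1
  have hinj2 : Function.Injective (fun i => (⟨(w i : ℕ), hub i⟩ : Fin (jj : ℕ))) := by
    intro a b hab
    apply hwinj
    have := congrArg Fin.val hab
    simp only at this
    exact Fin.ext this
  simpa using Fintype.card_le_of_injective _ hinj2

lemma count_gt {l : ℕ} (y : Fin l → ℝ) (hyanti : StrictAnti y) {M : ℕ} (v : Fin M → ℝ)
    (hvinj : Function.Injective v) (hvy : ∀ i, ∃ a, y a = v i) (jj : Fin l)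
    (hlt : ∀ i, v i < y jj) : M ≤ l - ((jj : ℕ) + 1) := by
  choose w hw using hvy
  have hwinj : Function.Injective w := fun a b hab => hvinj (by rw [← hw a, ← hw b, hab])
  have hlb : ∀ i, (jj : ℕ) < (w i : ℕ) := by
    intro i
    have h1 : y (w i) < y jj := by rw [hw]; exact hlt i
    exact hyanti.lt_iff_gt.mp h1
  have hinj2 : Function.Injective
      (fun i => (⟨(w i : ℕ) - ((jj : ℕ) + 1), by
        have := (w i).2; have := hlb i; omega⟩ : Fin (l - ((jj : ℕ) + 1)))) := by
    intro a b hab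
    apply hwinj
    have := congrArg Fin.val hab
    simp only at this
    have ha := hlb a; have hb := hlb b
    exact Fin.ext (by omega)
  simpa using Fintype.card_le_of_injective _ hinj2

/-- **interlacing.** Let `n ≥ 1`, let `x 0 > x 1 > ⋯ > x (k-1)` be
all the zeros of `P_{n−1}` in `(0,∞)` and `y 0 > y 1 > ⋯ > y (l-1)` all the zeros
of `Pₙ` in `(0,∞)` (both listed in decreasing order, so `x j` is the zero
`x_{j+1}` of the paper). Then for every `j < k` the zero `y j` exists and
`y j > x j`, while `y j < x (j−1)` for `j ≥ 1`; moreover if `n ≡ 0` or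
`n ≡ 2 (mod 3)` there is an additional zero `y k` with `0 < y k` smaller than
every `x i` (i.e. `0 < y_{k+1} < x_k` in the paper's notation). -/
theorem stmt14 (n : ℕ) (hn : 1 ≤ n) (k l : ℕ) (x : Fin k → ℝ) (y : Fin l → ℝ)
    (hxpos : ∀ i, 0 < x i) (hxzero : ∀ i, P (n - 1) ((x i : ℝ) : ℂ) = 0)
    (hxall : ∀ t : ℝ, 0 < t → P (n - 1) (t : ℂ) = 0 → ∃ i, x i = t)
    (hxanti : StrictAnti x)
    (hypos : ∀ i, 0 < y i) (hyzero : ∀ i, P n ((y i : ℝ) : ℂ) = 0)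
    (hyall : ∀ t : ℝ, 0 < t → P n (t : ℂ) = 0 → ∃ i, y i = t)
    (hyanti : StrictAnti y) :
    (∀ (j : ℕ) (hjk : j < k), ∃ hjl : j < l,
      x ⟨j, hjk⟩ < y ⟨j, hjl⟩ ∧
      ∀ hj1 : 1 ≤ j, y ⟨j, hjl⟩ < x ⟨j - 1, by omega⟩) ∧
    ((n % 3 = 0 ∨ n % 3 = 2) → ∃ hkl : k < l,
      0 < y ⟨k, hkl⟩ ∧ ∀ i : Fin k, y ⟨k, hkl⟩ < x i) := by
  obtain ⟨m, rfl⟩ : ∃ m, n = m + 1 := ⟨n - 1, by omega⟩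
  simp only [Nat.add_sub_cancel] at hxzero hxall
  have hxroot : ∀ i, (qq m).eval (x i) = 0 := fun i => (P_zero_iff m (x i)).mp (hxzero i)
  have hyroot : ∀ i, (qq (m+1)).eval (y i) = 0 := fun i => (P_zero_iff (m+1) (y i)).mp (hyzero i)
  have hxall' : ∀ t, 0 < t → (qq m).eval t = 0 → ∃ i, x i = t := fun t ht h =>
    hxall t ht ((P_zero_iff m t).mpr h)
  have hyall' : ∀ t, 0 < t → (qq (m+1)).eval t = 0 → ∃ i, y i = t := fun t ht h =>
    hyall t ht ((P_zero_iff (m+1) t).mpr h)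
  -- cardinalities
  have hxcard : k = (Z m).card := by
    have himg : Finset.image x Finset.univ = Z m := by
      ext t
      simp only [Finset.mem_image, Finset.mem_univ, true_and]
      constructor
      · rintro ⟨i, rfl⟩; exact mem_Z.mpr ⟨hxpos i, hxroot i⟩
      · intro ht; exact hxall' t (mem_Z.mp ht).1 (mem_Z.mp ht).2
    rw [← himg, Finset.card_image_of_injective _ hxanti.injective, Finset.card_univ,
      Fintype.card_fin]
  have hycard : l = (Z (m+1)).card := by
    have himg : Finset.image y Finset.univ = Z (m+1) := by
      ext t
      simp only [Finset.mem_image, Finset.mem_univ, true_and]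
      constructor
      · rintro ⟨i, rfl⟩; exact mem_Z.mpr ⟨hypos i, hyroot i⟩
      · intro ht; exact hyall' t (mem_Z.mp ht).1 (mem_Z.mp ht).2
    rw [← himg, Finset.card_image_of_injective _ hyanti.injective, Finset.card_univ,
      Fintype.card_fin]
  have hkval : k = 2*m/3 := by rw [hxcard, card_Z]
  have hlval : l = 2*(m+1)/3 := by rw [hycard, card_Z]
  have hlk0 : m % 3 = 0 → l = k := fun h => by rw [hkval, hlval, (div3_succ m).1 h]
  have hlk1 : m % 3 ≠ 0 → l = k + 1 := fun h => by rw [hkval, hlval, (div3_succ m).2 h]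
  have hkle : k ≤ l := by
    by_cases h : m % 3 = 0
    · rw [hlk0 h]
    · rw [hlk1 h]; omega
  -- gap roots
  obtain ⟨g, hganti, hgroot, hggt, hglt⟩ := exists_gaps m k x hxanti hxroot
  have hgpos : ∀ i, 0 < g i := fun i => lt_trans (hxpos i) (hggt i)
  have hgy : ∀ i : Fin k, ∃ a : Fin l, y a = g i := fun i =>
    hyall' (g i) (hgpos i) (hgroot i)
  constructor
  · intro j hjk
    have hjl : j < l := by omega
    refine ⟨hjl, ?_, ?_⟩
    · -- x_j < y_j
      by_contra hc
      push_neg at hc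
      -- the j+1 gap roots g_0, ..., g_j are all > y_j
      set v : Fin (j+1) → ℝ := fun i => g ⟨(i : ℕ), by omega⟩ with hv
      have hvinj : Function.Injective v := by
        intro a b hab
        have := hganti.injective (show g ⟨(a:ℕ), by omega⟩ = g ⟨(b:ℕ), by omega⟩ from hab)
        have := congrArg Fin.val this
        simp only at this
        exact Fin.ext this
      have hvgt : ∀ i, y ⟨j, hjl⟩ < v i := by
        intro i
        have h1 : x ⟨j, hjk⟩ ≤ x ⟨(i : ℕ), by omega⟩ := by
          apply hxanti.antitone
          rw [Fin.le_def]
          simp only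
          omega
        calc y ⟨j, hjl⟩ ≤ x ⟨j, hjk⟩ := hc
          _ ≤ x ⟨(i : ℕ), by omega⟩ := h1
          _ < v i := hggt _
      have := count_lt y hyanti v hvinj (fun i => hgy _) ⟨j, hjl⟩ hvgt
      simp only at this
      omega
    · -- y_j < x_{j-1}
      intro hj1
      by_contra hc
      push_neg at hc
      -- all gap roots g_i, i ≥ j, and possibly the bottom root, are < x_{j-1} ≤ y_j
      have hsmall : ∀ (i : Fin k), j ≤ (i : ℕ) → g i < x ⟨j - 1, by omega⟩ := by
        intro i hji
        have h1 : g i < x ⟨(i : ℕ) - 1, by omega⟩ := hglt i (by omega)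
        refine lt_of_lt_of_le h1 ?_
        apply hxanti.antitone
        rw [Fin.le_def]
        simp only
        omega
      by_cases h3 : m % 3 = 0
      · -- l = k, family of size k - j
        have hlk : l = k := hlk0 h3
        set v : Fin (k - j) → ℝ := fun i => g ⟨j + (i : ℕ), by omega⟩ with hv
        have hvinj : Function.Injective v := by
          intro a b hab
          have := hganti.injective (show g ⟨j + (a:ℕ), by omega⟩ = g ⟨j + (b:ℕ), by omega⟩ from hab)
          have := congrArg Fin.val this
          simp only at this
          exact Fin.ext (by omega)
        have hvlt : ∀ i, v i < y ⟨j, hjl⟩ :=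
          fun i => lt_of_lt_of_le (hsmall _ (by simp)) hc
        have := count_gt y hyanti v hvinj (fun i => hgy _) ⟨j, hjl⟩ hvlt
        simp only at this
        omega
      · -- l = k + 1, family of size k - j + 1 including bottom root
        have hlk : l = k + 1 := hlk1 h3
        obtain ⟨b, hb1, hb2, hb3⟩ := exists_bottom m k (qq_eval_zero m h3) x hxanti hxroot hxpos
        have hbg : ∀ i, b < g i := fun i => lt_trans (hb3 i) (hggt i)
        set v : Fin (k - j + 1) → ℝ := fun i =>
          if h : (i : ℕ) < k - j then g ⟨j + (i : ℕ), by omega⟩ else b with hv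
        have hvanti : StrictAnti v := by
          intro a b' hab
          rw [Fin.lt_def] at hab
          by_cases hbk : (b' : ℕ) < k - j
          · have hak : (a : ℕ) < k - j := by omega
            simp only [hv, dif_pos hak, dif_pos hbk]
            apply hganti
            rw [Fin.lt_def]
            simp only
            omega
          · have hak : (a : ℕ) < k - j := by omega
            simp only [hv, dif_pos hak, dif_neg hbk]
            exact hbg _
        have hvy : ∀ i, ∃ a : Fin l, y a = v i := by
          intro i
          by_cases hik : (i : ℕ) < k - j
          · simp only [hv, dif_pos hik]; exact hgy _
          · simp only [hv, dif_neg hik]; exact hyall' b hb1 hb2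
        have hvlt : ∀ i, v i < y ⟨j, hjl⟩ := by
          intro i
          by_cases hik : (i : ℕ) < k - j
          · simp only [hv, dif_pos hik]
            exact lt_of_lt_of_le (hsmall _ (by simp)) hc
          · simp only [hv, dif_neg hik]
            refine lt_of_le_of_lt ?_ (lt_of_lt_of_le (hsmall ⟨k - 1, by omega⟩ (by simp; omega)) hc)
            exact le_of_lt (lt_trans (hb3 ⟨k - 1, by omega⟩) (hggt _))
        have := count_gt y hyanti v hvanti.injective hvy ⟨j, hjl⟩ hvlt
        simp only at this
        omega
  · -- additional zero
    intro h30
    have h3 : m % 3 ≠ 0 := by omega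
    have hkl : k < l := by rw [hlk1 h3]; omega
    refine ⟨hkl, hypos _, ?_⟩
    intro i
    by_contra hc
    push_neg at hc
    obtain ⟨b, hb1, hb2, hb3⟩ := exists_bottom m k (qq_eval_zero m h3) x hxanti hxroot hxpos
    have hvlt : ∀ _i : Fin 1, b < y ⟨k, hkl⟩ := fun _ => lt_of_lt_of_le (hb3 i) hc
    have := count_gt y hyanti (fun _ : Fin 1 => b)
      (fun a b' _ => Subsingleton.elim a b') (fun _ => hyall' b hb1 hb2) ⟨k, hkl⟩ hvlt
    simp only at this
    omega
end
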